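/- For all integers m ≥ 1 and 1 ≤ r ≤ p, every x ∈ ℝ with Δ(x) ∈ (−2, 2), and either root Γ of Γ² − Δ(x)·Γ + 1 = 0, one has p_{mp+r−1}(x) = 2·Re(j_{r,Γ}(x)·Γ^m). (Equation (2.50): representation of p_{mp+r−1} on the interior of the bands.) -/

import Mathlib

open Polynomial Matrix

/-- The one-step transfer matrix `A_k(z)` for periodic OPRL. -/
noncomputable def JacobiA (a b : ℕ → ℝ) (k : ℕ) (z : ℂ) : Matrix (Fin 2) (Fin 2) ℂ :=
  ((a (k + 1) : ℂ))⁻¹ • !![z - (b (k + 1) : ℂ), -(a k : ℂ); (a (k + 1) : ℂ), 0]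

/-- The transfer matrix `T_n(z) = A_{n-1}(z) ⋯ A_0(z)`. -/
noncomputable def JacobiT (a b : ℕ → ℝ) : ℕ → ℂ → Matrix (Fin 2) (Fin 2) ℂ
  | 0, _ => 1
  | n + 1, z => JacobiA a b n z * JacobiT a b n z

/-- The discriminant `Δ(z) = tr T_p(z)`. -/
noncomputable def JacobiDisc (a b : ℕ → ℝ) (p : ℕ) (z : ℂ) : ℂ :=
  (JacobiT a b p z).trace

/-- The boundary-value Jost function `j_{r,Γ}(x) = a_Γ(x)·(T_r)₂₂ + b_Γ(x)·(T_r)₂₁`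
with `a_Γ(x) = (T_p)₂₁/(Γ - Γ⁻¹)`, `b_Γ(x) = ((T_p)₁₁ - Γ⁻¹)/(Γ - Γ⁻¹)`. -/
noncomputable def JacobiJostBand (a b : ℕ → ℝ) (p r : ℕ) (Γ : ℂ) (x : ℝ) : ℂ :=
  (JacobiT a b p (x : ℂ) 1 0 / (Γ - Γ⁻¹)) * (JacobiT a b r (x : ℂ) 1 1) +
    ((JacobiT a b p (x : ℂ) 0 0 - Γ⁻¹) / (Γ - Γ⁻¹)) * (JacobiT a b r (x : ℂ) 1 0)

lemma jacobiT_succ (a b : ℕ → ℝ) (n : ℕ) (z : ℂ) :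
    JacobiT a b (n + 1) z = JacobiA a b n z * JacobiT a b n z := rfl

lemma jacobiT_zero (a b : ℕ → ℝ) (z : ℂ) : JacobiT a b 0 z = 1 := rfl

lemma jacobiA_conj (a b : ℕ → ℝ) (k : ℕ) (x : ℝ) (i j : Fin 2) :
    (starRingEnd ℂ) (JacobiA a b k (x : ℂ) i j) = JacobiA a b k (x : ℂ) i j := by
  fin_cases i <;> fin_cases j <;>
    simp [JacobiA, Matrix.smul_apply, _root_.map_mul, Complex.conj_ofReal, map_sub, map_neg, map_inv₀]

lemma jacobiT_conj (a b : ℕ → ℝ) (n : ℕ) (x : ℝ) (i j : Fin 2) :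
    (starRingEnd ℂ) (JacobiT a b n (x : ℂ) i j) = JacobiT a b n (x : ℂ) i j := by
  induction n generalizing i j with
  | zero =>
    fin_cases i <;> fin_cases j <;> simp [jacobiT_zero, Matrix.one_apply]
  | succ n ih =>
    simp only [jacobiT_succ, Matrix.mul_apply, Fin.sum_univ_two, map_add, _root_.map_mul,
      jacobiA_conj, ih]

lemma jacobiT_entries (a b : ℕ → ℝ) (ha : ∀ n, 1 ≤ n → 0 < a n)
    (P : ℕ → Polynomial ℝ) (hP0 : P 0 = 1)
    (hPrec0 : (X : Polynomial ℝ) * P 0 = a 1 • P 1 + b 1 • P 0)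
    (hPrec : ∀ n, 1 ≤ n →
      (X : Polynomial ℝ) * P n = a (n + 1) • P (n + 1) + b (n + 1) • P n + a n • P (n - 1))
    (x : ℝ) :
    ∀ n, JacobiT a b (n + 1) (x : ℂ) 0 0 = (((P (n + 1)).eval x : ℝ) : ℂ) ∧
         JacobiT a b (n + 1) (x : ℂ) 1 0 = (((P n).eval x : ℝ) : ℂ) := by
  intro n
  induction n with
  | zero =>
    have ha1 : (a 1 : ℂ) ≠ 0 := by exact_mod_cast (ha 1 le_rfl).ne'
    have h1 : (x : ℂ) = (a 1 : ℂ) * (((P 1).eval x : ℝ) : ℂ) + (b 1 : ℂ) := by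
      have hr : x = a 1 * (P 1).eval x + b 1 := by
        have := congrArg (Polynomial.eval x) hPrec0
        simpa [hP0] using this
      exact_mod_cast congrArg (Complex.ofReal) hr
    constructor
    · show (JacobiA a b 0 (x : ℂ) * JacobiT a b 0 (x : ℂ)) 0 0 = _
      rw [jacobiT_zero, mul_one]
      simp only [JacobiA, Matrix.smul_apply, Matrix.cons_val', Matrix.cons_val_zero,
        Matrix.empty_val', Matrix.cons_val_fin_one, Matrix.of_apply, smul_eq_mul]
      field_simp
      linear_combination h1
    · show (JacobiA a b 0 (x : ℂ) * JacobiT a b 0 (x : ℂ)) 1 0 = _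
      rw [jacobiT_zero, mul_one]
      simp only [JacobiA, Matrix.smul_apply, Matrix.cons_val', Matrix.cons_val_zero,
        Matrix.empty_val', Matrix.cons_val_fin_one, Matrix.of_apply, Matrix.cons_val_one,
        Matrix.head_cons, smul_eq_mul, hP0]
      field_simp
      simp
  | succ n ih =>
    obtain ⟨ih0, ih1⟩ := ih
    have han : (a (n + 2) : ℂ) ≠ 0 := by exact_mod_cast (ha (n + 2) (by omega)).ne'
    have h1 : (x : ℂ) * (((P (n + 1)).eval x : ℝ) : ℂ) =
        (a (n + 2) : ℂ) * (((P (n + 2)).eval x : ℝ) : ℂ) + (b (n + 2) : ℂ) * (((P (n + 1)).eval x : ℝ) : ℂ)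
          + (a (n + 1) : ℂ) * (((P n).eval x : ℝ) : ℂ) := by
      have hr : x * (P (n+1)).eval x = a (n+2) * (P (n+2)).eval x
          + b (n+2) * (P (n+1)).eval x + a (n+1) * (P n).eval x := by
        have := congrArg (Polynomial.eval x) (hPrec (n + 1) (by omega))
        simpa using this
      exact_mod_cast congrArg (Complex.ofReal) hr
    constructor
    · show (JacobiA a b (n + 1) (x : ℂ) * JacobiT a b (n + 1) (x : ℂ)) 0 0 = _
      rw [Matrix.mul_apply, Fin.sum_univ_two, ih0, ih1]
      simp only [JacobiA, Matrix.smul_apply, Matrix.cons_val', Matrix.cons_val_zero,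
        Matrix.empty_val', Matrix.cons_val_fin_one, Matrix.of_apply, Matrix.cons_val_one,
        Matrix.head_cons, smul_eq_mul]
      field_simp
      linear_combination h1
    · show (JacobiA a b (n + 1) (x : ℂ) * JacobiT a b (n + 1) (x : ℂ)) 1 0 = _
      rw [Matrix.mul_apply, Fin.sum_univ_two, ih0, ih1]
      simp only [JacobiA, Matrix.smul_apply, Matrix.cons_val', Matrix.cons_val_zero,
        Matrix.empty_val', Matrix.cons_val_fin_one, Matrix.of_apply, Matrix.cons_val_one,
        Matrix.head_cons, smul_eq_mul]
      field_simp
      ring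

lemma jacobiA_per (p : ℕ) (hp : 1 ≤ p) (a b : ℕ → ℝ)
    (hpera : ∀ n, 1 ≤ n → a (n + p) = a n)
    (hperb : ∀ n, 1 ≤ n → b (n + p) = b n)
    (ha0 : a 0 = a p) (k : ℕ) (z : ℂ) :
    JacobiA a b (k + p) z = JacobiA a b k z := by
  have h1 : a (k + p) = a k := by
    cases k with
    | zero => simpa using ha0.symm
    | succ k => exact hpera (k + 1) (by omega)
  have h2 : a (k + p + 1) = a (k + 1) := by
    rw [show k + p + 1 = (k + 1) + p by ring]; exact hpera (k + 1) (by omega)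
  have h3 : b (k + p + 1) = b (k + 1) := by
    rw [show k + p + 1 = (k + 1) + p by ring]; exact hperb (k + 1) (by omega)
  unfold JacobiA
  rw [h1, h2, h3]

lemma jacobiT_add_per (p : ℕ) (hp : 1 ≤ p) (a b : ℕ → ℝ)
    (hpera : ∀ n, 1 ≤ n → a (n + p) = a n)
    (hperb : ∀ n, 1 ≤ n → b (n + p) = b n)
    (ha0 : a 0 = a p) (z : ℂ) :
    ∀ n, JacobiT a b (n + p) z = JacobiT a b n z * JacobiT a b p z := by
  intro n
  induction n with
  | zero => rw [Nat.zero_add, jacobiT_zero, one_mul]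
  | succ n ih =>
    rw [show n + 1 + p = (n + p) + 1 by ring, jacobiT_succ, ih,
      jacobiA_per p hp a b hpera hperb ha0, jacobiT_succ, mul_assoc]

lemma jacobiT_mul_pow (p : ℕ) (hp : 1 ≤ p) (a b : ℕ → ℝ)
    (hpera : ∀ n, 1 ≤ n → a (n + p) = a n)
    (hperb : ∀ n, 1 ≤ n → b (n + p) = b n)
    (ha0 : a 0 = a p) (z : ℂ) (r : ℕ) :
    ∀ m, JacobiT a b (m * p + r) z = JacobiT a b r z * (JacobiT a b p z) ^ m := by
  intro m
  induction m with
  | zero => simp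
  | succ m ih =>
    rw [show (m + 1) * p + r = (m * p + r) + p by ring,
      jacobiT_add_per p hp a b hpera hperb ha0, ih, pow_succ, mul_assoc]

lemma jacobiT_det (a b : ℕ → ℝ) (ha : ∀ n, 0 < a n) (z : ℂ) :
    ∀ n, (JacobiT a b n z).det = (a 0 : ℂ) / (a n : ℂ) := by
  intro n
  induction n with
  | zero => simp [jacobiT_zero, div_self (show (a 0 : ℂ) ≠ 0 by exact_mod_cast (ha 0).ne')]
  | succ n ih =>
    have hA : (JacobiA a b n z).det = (a n : ℂ) / (a (n + 1) : ℂ) := by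
      have h1 : ((a (n + 1) : ℝ) : ℂ) ≠ 0 := by exact_mod_cast (ha (n + 1)).ne'
      rw [JacobiA, Matrix.det_smul, Matrix.det_fin_two_of]
      simp only [Fintype.card_fin]
      field_simp
      ring
    rw [jacobiT_succ, Matrix.det_mul, hA, ih]
    have h1 : ((a (n + 1) : ℝ) : ℂ) ≠ 0 := by exact_mod_cast (ha (n + 1)).ne'
    have h2 : ((a n : ℝ) : ℂ) ≠ 0 := by exact_mod_cast (ha n).ne'
    field_simp

lemma cayley_hamilton_two (M : Matrix (Fin 2) (Fin 2) ℂ) (h : M.det = 1) :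
    M * M = M.trace • M - 1 := by
  rw [Matrix.det_fin_two] at h
  ext i j
  fin_cases i <;> fin_cases j <;>
    simp [Matrix.mul_apply, Fin.sum_univ_two, Matrix.trace_fin_two, Matrix.smul_apply,
      Matrix.sub_apply, Matrix.one_apply] <;>
    first
      | linear_combination -h
      | ring

lemma pow_formula (M : Matrix (Fin 2) (Fin 2) ℂ) (Γ : ℂ) (hΓ0 : Γ ≠ 0)
    (htr : M.trace = Γ + Γ⁻¹) (hdet : M.det = 1) :
    ∀ k, (Γ - Γ⁻¹) • M ^ (k + 1) =
      (Γ ^ (k + 1) - (Γ⁻¹) ^ (k + 1)) • M + ((Γ⁻¹) ^ k - Γ ^ k) • (1 : Matrix (Fin 2) (Fin 2) ℂ) := by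
  intro k
  induction k with
  | zero => simp
  | succ k ih =>
    have hγ : Γ * Γ⁻¹ = 1 := mul_inv_cancel₀ hΓ0
    have hch := cayley_hamilton_two M hdet
    have e1 : (Γ ^ (k + 1) - Γ⁻¹ ^ (k + 1)) * (Γ + Γ⁻¹) + (Γ⁻¹ ^ k - Γ ^ k)
        = Γ ^ (k + 2) - Γ⁻¹ ^ (k + 2) := by
      linear_combination (Γ ^ k - Γ⁻¹ ^ k) * hγ
    calc (Γ - Γ⁻¹) • M ^ (k + 2)
        = ((Γ - Γ⁻¹) • M ^ (k + 1)) * M := by rw [pow_succ, smul_mul_assoc]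
      _ = ((Γ ^ (k + 1) - Γ⁻¹ ^ (k + 1)) • M + (Γ⁻¹ ^ k - Γ ^ k) • 1) * M := by rw [ih]
      _ = (Γ ^ (k + 1) - Γ⁻¹ ^ (k + 1)) • (M * M) + (Γ⁻¹ ^ k - Γ ^ k) • M := by
          rw [add_mul, smul_mul_assoc, smul_mul_assoc, one_mul]
      _ = (Γ ^ (k + 1) - Γ⁻¹ ^ (k + 1)) • ((Γ + Γ⁻¹) • M - 1) + (Γ⁻¹ ^ k - Γ ^ k) • M := by
          rw [hch, htr]
      _ = ((Γ ^ (k + 1) - Γ⁻¹ ^ (k + 1)) * (Γ + Γ⁻¹) + (Γ⁻¹ ^ k - Γ ^ k)) • M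
            - (Γ ^ (k + 1) - Γ⁻¹ ^ (k + 1)) • 1 := by
          rw [smul_sub, smul_smul, add_smul]; abel
      _ = (Γ ^ (k + 2) - Γ⁻¹ ^ (k + 2)) • M + (Γ⁻¹ ^ (k + 1) - Γ ^ (k + 1)) • 1 := by
          rw [e1, sub_eq_add_neg, ← neg_smul]; ring_nf

lemma smul_div_helper (d A B s1 s2 u : ℂ) (hd : d ≠ 0) :
    d * ((A / d * s1 + B / d * s2) * u) = (A * s1 + B * s2) * u := by
  field_simp

/-- **Eq. (2.50).** On the interior of the bands, for `m ≥ 1` and `1 ≤ r ≤ p`,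
`p_{mp+r-1}(x) = 2 Re(j_{r,Γ}(x) Γ^m)` for either root `Γ` of `Γ² - Δ(x)Γ + 1 = 0`. -/
theorem oprl_periodic_band_representation
    (p : ℕ) (hp : 1 ≤ p) (a b : ℕ → ℝ)
    (ha : ∀ n, 1 ≤ n → 0 < a n)
    (hpera : ∀ n, 1 ≤ n → a (n + p) = a n)
    (hperb : ∀ n, 1 ≤ n → b (n + p) = b n)
    (ha0 : a 0 = a p)
    (P : ℕ → Polynomial ℝ)
    (hP0 : P 0 = 1)
    (hPrec0 : (X : Polynomial ℝ) * P 0 = a 1 • P 1 + b 1 • P 0)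
    (hPrec : ∀ n, 1 ≤ n →
      (X : Polynomial ℝ) * P n = a (n + 1) • P (n + 1) + b (n + 1) • P n + a n • P (n - 1))
    (m : ℕ) (hm : 1 ≤ m) (r : ℕ) (hr1 : 1 ≤ r) (hrp : r ≤ p)
    (x : ℝ)
    (hx : ∃ t : ℝ, t ∈ Set.Ioo (-2 : ℝ) 2 ∧ JacobiDisc a b p (x : ℂ) = (t : ℂ))
    (Γ : ℂ)
    (hΓ : Γ ^ 2 - JacobiDisc a b p (x : ℂ) * Γ + 1 = 0) :
    (P (m * p + r - 1)).eval x = 2 * (JacobiJostBand a b p r Γ x * Γ ^ m).re := by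
  obtain ⟨t, ⟨ht1, ht2⟩, hΔ⟩ := hx
  rw [hΔ] at hΓ
  -- positivity of all a n
  have hapos : ∀ n, 0 < a n := by
    intro n
    cases n with
    | zero => rw [ha0]; exact ha p hp
    | succ n => exact ha (n + 1) (by omega)
  -- Γ facts
  have hΓ0 : Γ ≠ 0 := by
    intro h; rw [h] at hΓ; simp at hΓ
  have hγ : Γ * Γ⁻¹ = 1 := mul_inv_cancel₀ hΓ0
  have him : Γ.im ≠ 0 := by
    intro h
    have hΓre : Γ = (Γ.re : ℂ) := Complex.ext rfl (by simp [h])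
    rw [hΓre] at hΓ
    have hr : Γ.re ^ 2 - t * Γ.re + 1 = 0 := by exact_mod_cast hΓ
    nlinarith [sq_nonneg (2 * Γ.re - t)]
  have hc : (starRingEnd ℂ) Γ ^ 2 - (t : ℂ) * (starRingEnd ℂ) Γ + 1 = 0 := by
    have := congrArg (starRingEnd ℂ) hΓ
    simpa [map_pow, Complex.conj_ofReal] using this
  have hne : Γ - (starRingEnd ℂ) Γ ≠ 0 := by
    intro h
    have h2 : Γ = (starRingEnd ℂ) Γ := sub_eq_zero.mp h
    exact him (Complex.conj_eq_iff_im.mp h2.symm)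
  have hsum : Γ + (starRingEnd ℂ) Γ = (t : ℂ) := by
    have hfac : (Γ - (starRingEnd ℂ) Γ) * (Γ + (starRingEnd ℂ) Γ - (t : ℂ)) = 0 := by
      linear_combination hΓ - hc
    rcases mul_eq_zero.mp hfac with h | h
    · exact absurd h hne
    · linear_combination h
  have hprod : Γ * (starRingEnd ℂ) Γ = 1 := by
    linear_combination Γ * hsum - hΓ
  have hconj : (starRingEnd ℂ) Γ = Γ⁻¹ :=
    eq_inv_of_mul_eq_one_left (by rw [mul_comm]; exact hprod)
  have hD : Γ - Γ⁻¹ ≠ 0 := by rw [← hconj]; exact hne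
  -- trace and determinant
  have htr : (JacobiT a b p (x : ℂ)).trace = Γ + Γ⁻¹ := by
    rw [show (JacobiT a b p (x : ℂ)).trace = JacobiDisc a b p (x : ℂ) from rfl, hΔ,
      ← hsum, hconj]
  have hdet : (JacobiT a b p (x : ℂ)).det = 1 := by
    rw [jacobiT_det a b hapos (x : ℂ) p, ha0,
      div_self (show ((a p : ℝ) : ℂ) ≠ 0 by exact_mod_cast (hapos p).ne')]
  -- main
  obtain ⟨k, rfl⟩ : ∃ k, m = k + 1 := ⟨m - 1, by omega⟩
  set Tp := JacobiT a b p (x : ℂ) with hTp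
  set Tr := JacobiT a b r (x : ℂ) with hTr
  have hpow := pow_formula Tp Γ hΓ0 htr hdet k
  have h00 : (Γ - Γ⁻¹) * (Tp ^ (k + 1)) 0 0
      = (Γ ^ (k + 1) - Γ⁻¹ ^ (k + 1)) * Tp 0 0 + (Γ⁻¹ ^ k - Γ ^ k) := by
    have := congrArg (fun M : Matrix (Fin 2) (Fin 2) ℂ => M 0 0) hpow
    simpa [Matrix.smul_apply, Matrix.add_apply, Matrix.one_apply, smul_eq_mul] using this
  have h10 : (Γ - Γ⁻¹) * (Tp ^ (k + 1)) 1 0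
      = (Γ ^ (k + 1) - Γ⁻¹ ^ (k + 1)) * Tp 1 0 := by
    have := congrArg (fun M : Matrix (Fin 2) (Fin 2) ℂ => M 1 0) hpow
    simpa [Matrix.smul_apply, Matrix.add_apply, Matrix.one_apply, smul_eq_mul] using this
  have hentry : JacobiT a b ((k + 1) * p + r) (x : ℂ) 1 0
      = (((P ((k + 1) * p + r - 1)).eval x : ℝ) : ℂ) := by
    have hn : (k + 1) * p + r = ((k + 1) * p + r - 1) + 1 := by omega
    rw [hn]
    exact (jacobiT_entries a b ha P hP0 hPrec0 hPrec x ((k + 1) * p + r - 1)).2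
  have hmul : JacobiT a b ((k + 1) * p + r) (x : ℂ) 1 0
      = Tr 1 0 * (Tp ^ (k + 1)) 0 0 + Tr 1 1 * (Tp ^ (k + 1)) 1 0 := by
    rw [jacobiT_mul_pow p hp a b hpera hperb ha0 (x : ℂ) r (k + 1),
      Matrix.mul_apply, Fin.sum_univ_two]
  -- conjugation of the Jost combination
  set w := JacobiJostBand a b p r Γ x * Γ ^ (k + 1) with hw
  have c00 : (starRingEnd ℂ) (Tp 0 0) = Tp 0 0 := jacobiT_conj a b p x 0 0
  have c10 : (starRingEnd ℂ) (Tp 1 0) = Tp 1 0 := jacobiT_conj a b p x 1 0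
  have cr10 : (starRingEnd ℂ) (Tr 1 0) = Tr 1 0 := jacobiT_conj a b r x 1 0
  have cr11 : (starRingEnd ℂ) (Tr 1 1) = Tr 1 1 := jacobiT_conj a b r x 1 1
  have hconjw : (starRingEnd ℂ) w
      = (Tp 1 0 / (Γ⁻¹ - Γ) * Tr 1 1 + (Tp 0 0 - Γ) / (Γ⁻¹ - Γ) * Tr 1 0) * (Γ⁻¹) ^ (k + 1) := by
    rw [hw]
    unfold JacobiJostBand
    rw [← hTp, ← hTr]
    simp only [map_add, _root_.map_mul, map_div₀, map_sub, map_pow, _root_.map_one, map_inv₀,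
      hconj, inv_inv, c00, c10, cr10, cr11]
  have hq : Γ ^ 2 - 1 ≠ 0 := by
    intro h
    apply hD
    have : Γ - Γ⁻¹ = (Γ ^ 2 - 1) * Γ⁻¹ := by field_simp
    rw [this, h, zero_mul]
  have hDw : (Γ - Γ⁻¹) * w
      = (Tp 1 0 * Tr 1 1 + (Tp 0 0 - Γ⁻¹) * Tr 1 0) * Γ ^ (k + 1) := by
    rw [hw]
    unfold JacobiJostBand
    rw [← hTp, ← hTr]
    exact smul_div_helper _ _ _ _ _ _ hD
  have hDcw : (Γ - Γ⁻¹) * (starRingEnd ℂ) w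
      = -(Tp 1 0 * Tr 1 1 + (Tp 0 0 - Γ) * Tr 1 0) * (Γ⁻¹) ^ (k + 1) := by
    have hD' : Γ⁻¹ - Γ ≠ 0 := by
      intro h; apply hD; linear_combination -h
    rw [hconjw]
    have h1 := smul_div_helper (Γ⁻¹ - Γ) (Tp 1 0) (Tp 0 0 - Γ) (Tr 1 1) (Tr 1 0)
      (Γ⁻¹ ^ (k + 1)) hD'
    linear_combination -h1
  have hkey : (((P ((k + 1) * p + r - 1)).eval x : ℝ) : ℂ) = w + (starRingEnd ℂ) w := by
    rw [← hentry, hmul]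
    apply mul_left_cancel₀ hD
    rw [mul_add (Γ - Γ⁻¹) w ((starRingEnd ℂ) w), hDw, hDcw]
    rw [mul_add (Γ - Γ⁻¹) (Tr 1 0 * (Tp ^ (k + 1)) 0 0) (Tr 1 1 * (Tp ^ (k + 1)) 1 0)]
    linear_combination Tr 1 0 * h00 + Tr 1 1 * h10 + Tr 1 0 * (Γ ^ k - Γ⁻¹ ^ k) * hγ
  have hfin : (((P ((k + 1) * p + r - 1)).eval x : ℝ) : ℂ) = ((2 * w.re : ℝ) : ℂ) := by
    rw [hkey]
    exact_mod_cast Complex.add_conj w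
  exact_mod_cast hfin
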